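/- Let B be an M×K complex matrix with BᴴB invertible, B† = (BᴴB)⁻¹Bᴴ, P⊥ = I_M − B B†, let D be an M×K complex matrix such that for every nonzero x ∈ ℂ^K the vector Dx does not lie in the column space of B, and let Σ be a K×K Hermitian positive definite matrix. Then the real K×K matrix H = 2 Re((Dᴴ P⊥ D) ⊙ Σᵀ) is symmetric positive definite (positive-definiteness part of Theorem 1: the DML Hessian at the true DOAs is positive definite). -/

import Mathlib

open Matrix
open scoped Matrix ComplexOrder

/-- `Cᴴ * C` is positive definite when `C` has trivial kernel. -/
lemma aux_posDef_conjTranspose_mul_self {m n : ℕ} (C : Matrix (Fin m) (Fin n) ℂ)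
    (h : ∀ x : Fin n → ℂ, x ≠ 0 → C *ᵥ x ≠ 0) : (Cᴴ * C).PosDef := by
  refine PosDef.of_dotProduct_mulVec_pos (isHermitian_conjTranspose_mul_self _) fun x hx => ?_
  rw [← mulVec_mulVec, dotProduct_mulVec, vecMul_conjTranspose, star_star]
  exact dotProduct_star_self_pos_iff.mpr (h x hx)

/-- Positive-definiteness part of Theorem 1: H = 2 Re((Dᴴ P⊥ D) ⊙ Σᵀ) is
symmetric positive definite. -/
theorem stmt_5 {M K : ℕ} (B D : Matrix (Fin M) (Fin K) ℂ)
    (hB : IsUnit (Bᴴ * B).det)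
    (Pperp : Matrix (Fin M) (Fin M) ℂ)
    (hP : Pperp = (1 : Matrix (Fin M) (Fin M) ℂ) - B * ((Bᴴ * B)⁻¹ * Bᴴ))
    (hD : ∀ x : Fin K → ℂ, x ≠ 0 → D *ᵥ x ∉ LinearMap.range B.mulVecLin)
    (S : Matrix (Fin K) (Fin K) ℂ) (hS : S.PosDef)
    (H : Matrix (Fin K) (Fin K) ℝ)
    (hH : H = Matrix.of fun i j => 2 * (((Dᴴ * Pperp * D) ⊙ Sᵀ) i j).re) :
    H.PosDef := by
  set A : Matrix (Fin K) (Fin K) ℂ := Dᴴ * Pperp * D with hAdef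
  set Q : Matrix (Fin M) (Fin M) ℂ := B * ((Bᴴ * B)⁻¹ * Bᴴ) with hQdef
  -- Q is idempotent
  have hQ : Q * Q = Q := by
    have h0 : (Bᴴ * B)⁻¹ * (Bᴴ * B) = 1 := Matrix.nonsing_inv_mul _ hB
    rw [hQdef]
    rw [Matrix.mul_assoc B ((Bᴴ * B)⁻¹ * Bᴴ) (B * ((Bᴴ * B)⁻¹ * Bᴴ))]
    congr 1
    rw [Matrix.mul_assoc ((Bᴴ * B)⁻¹) Bᴴ (B * ((Bᴴ * B)⁻¹ * Bᴴ)),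
      ← Matrix.mul_assoc Bᴴ B ((Bᴴ * B)⁻¹ * Bᴴ),
      ← Matrix.mul_assoc ((Bᴴ * B)⁻¹) (Bᴴ * B) ((Bᴴ * B)⁻¹ * Bᴴ), h0, Matrix.one_mul]
  -- Q is Hermitian
  have hQh : Qᴴ = Q := by
    rw [hQdef, conjTranspose_mul, conjTranspose_mul, conjTranspose_nonsing_inv,
      conjTranspose_conjTranspose,
      show (Bᴴ * B)ᴴ = Bᴴ * B from by rw [conjTranspose_mul, conjTranspose_conjTranspose],
      Matrix.mul_assoc]
  -- Pperp is Hermitian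
  have hPh : Pperpᴴ = Pperp := by
    rw [hP, conjTranspose_sub, conjTranspose_one, hQh]
  -- Pperp is idempotent
  have hPi : Pperp * Pperp = Pperp := by
    rw [hP, sub_mul, Matrix.one_mul, mul_sub, Matrix.mul_one, hQ]
    abel
  -- A = (Pperp * D)ᴴ * (Pperp * D)
  have hAeq : A = (Pperp * D)ᴴ * (Pperp * D) := by
    rw [hAdef, conjTranspose_mul, hPh]
    calc Dᴴ * Pperp * D = Dᴴ * ((Pperp * Pperp) * D) := by
          rw [hPi, Matrix.mul_assoc]
      _ = Dᴴ * Pperp * (Pperp * D) := by simp only [Matrix.mul_assoc]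
  -- A is positive definite
  have hApd : A.PosDef := by
    rw [hAeq]
    refine aux_posDef_conjTranspose_mul_self _ (fun x hx hzero => ?_)
    apply hD x hx
    rw [← mulVec_mulVec, hP, sub_mulVec, one_mulVec, sub_eq_zero] at hzero
    refine ⟨((Bᴴ * B)⁻¹ * Bᴴ) *ᵥ (D *ᵥ x), ?_⟩
    rw [mulVecLin_apply, mulVec_mulVec]
    exact hzero.symm
  -- square root of S
  obtain ⟨R, hRmul, hRh⟩ : ∃ R : Matrix (Fin K) (Fin K) ℂ, R * R = S ∧ R.IsHermitian := by
    open scoped MatrixOrder in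
    exact ⟨CFC.sqrt S, CFC.sqrt_mul_sqrt_self S hS.posSemidef.nonneg,
      (CFC.sqrt_nonneg S).posSemidef.isHermitian⟩
  refine PosDef.of_dotProduct_mulVec_pos ?_ ?_
  · -- Hermitian
    ext i j
    rw [conjTranspose_apply, hH]
    simp only [of_apply, hadamard_apply, transpose_apply, star_trivial]
    have h1 : A j i * S i j = star (A i j * S j i) := by
      rw [star_mul', hApd.isHermitian.apply, hS.isHermitian.apply]
    rw [h1, Complex.star_def, Complex.conj_re]
  · intro x hx
    rw [star_trivial]
    set y : Fin K → ℂ := fun i => (x i : ℂ) with hy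
    set w : Fin K → Fin K → ℂ := fun m j => y j * R j m with hw
    have hconj : ∀ a b, (starRingEnd ℂ) (R a b) = R b a := fun a b => hRh.apply b a
    have hstar : ∀ m i, star (w m) i = y i * R m i := by
      intro m i
      simp only [hw, hy, Pi.star_apply, star_mul', Complex.star_def,
        Complex.conj_ofReal, hconj]
    -- each summand, complex form
    have h1 : ∀ m, star (w m) ⬝ᵥ (A *ᵥ w m)
        = ∑ i, ∑ j, (y i * A i j * y j) * (R j m * R m i) := by
      intro m
      simp only [dotProduct, mulVec]
      refine Finset.sum_congr rfl fun i _ => ?_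
      rw [hstar, Finset.mul_sum]
      refine Finset.sum_congr rfl fun j _ => ?_
      simp only [hw, hy]
      ring
    have h2 : ∑ m, star (w m) ⬝ᵥ (A *ᵥ w m)
        = ∑ i, ∑ j, (y i * A i j * y j) * S j i := by
      simp only [h1]
      rw [Finset.sum_comm]
      refine Finset.sum_congr rfl fun i _ => ?_
      rw [Finset.sum_comm]
      refine Finset.sum_congr rfl fun j _ => ?_
      rw [← Finset.mul_sum, ← Matrix.mul_apply, hRmul]
    have key : x ⬝ᵥ (H *ᵥ x) = ∑ m, 2 * (star (w m) ⬝ᵥ (A *ᵥ w m)).re := by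
      have hr : ∑ m, 2 * (star (w m) ⬝ᵥ (A *ᵥ w m)).re
          = 2 * (∑ m, star (w m) ⬝ᵥ (A *ᵥ w m)).re := by
        rw [Complex.re_sum, Finset.mul_sum]
      rw [hr, h2, Complex.re_sum, Finset.mul_sum, hH]
      simp only [dotProduct, mulVec, of_apply, hadamard_apply, transpose_apply]
      refine Finset.sum_congr rfl fun i _ => ?_
      rw [Finset.mul_sum, Complex.re_sum, Finset.mul_sum]
      refine Finset.sum_congr rfl fun j _ => ?_
      have he : (y i * A i j * y j) * S j i
          = (x i : ℂ) * ((x j : ℂ) * (A i j * S j i)) := by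
        simp only [hy]; ring
      rw [he, Complex.re_ofReal_mul, Complex.re_ofReal_mul]
      ring
    rw [key]
    -- positivity
    obtain ⟨j, hj⟩ := Function.ne_iff.mp hx
    have hyj : y j ≠ 0 := by simpa [hy] using hj
    have hm : ∃ m, R j m ≠ 0 := by
      by_contra hcon
      push_neg at hcon
      have hSjj : S j j = 0 := by
        rw [← hRmul, Matrix.mul_apply]
        exact Finset.sum_eq_zero fun m _ => by rw [hcon m, zero_mul]
      have hpos := hS.re_dotProduct_pos (x := Pi.single j 1) (by
        intro h0
        have := congr_fun h0 j
        simp at this)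
      have heq : star (Pi.single j (1:ℂ)) ⬝ᵥ (S *ᵥ Pi.single j 1) = S j j := by
        simp [dotProduct, mulVec, Pi.single_apply, mul_ite, ite_mul,
          Pi.star_apply, apply_ite (star : ℂ → ℂ)]
      rw [heq, hSjj] at hpos
      simp at hpos
    obtain ⟨m, hmne⟩ := hm
    have hwm : w m ≠ 0 := by
      intro h0
      have := congr_fun h0 j
      simp only [hw, Pi.zero_apply] at this
      exact (mul_ne_zero hyj hmne) this
    refine Finset.sum_pos' (fun i _ => ?_) ⟨m, Finset.mem_univ m, ?_⟩
    · have := hApd.posSemidef.re_dotProduct_nonneg (w i)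
      simp only [RCLike.re_to_complex] at this
      linarith
    · have := hApd.re_dotProduct_pos hwm
      simp only [RCLike.re_to_complex] at this
      linarith
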